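/- Let M be a σ-compact Hausdorff finite-dimensional smooth manifold without boundary, let A ⊆ M be a closed set, let B ⊆ M be a nonempty compact set with A ∩ B = ∅, and let c > 0 be a real number. Then there exists a smooth function f : M → ℝ such that f = 0 on A, f > c on B, and c is a regular value of f, i.e., for every x ∈ M with f(x) = c the differential of f at x is nonzero (equivalently, surjective onto ℝ). -/

import Mathlib

open scoped Manifold ENNReal Topology ContDiff
open Set Function Metric Module

section SardHelpers

variable {ι : Type*} [Fintype ι] [DecidableEq ι]
variable {E : Type*} [NormedAddCommGroup E] [InnerProductSpace ℝ E] [FiniteDimensional ℝ E]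

/-- Reassembling an `ι`-indexed vector from its components away from `j` and a new `j`-th
component. -/
noncomputable def asmFun (j : ι) (p : ({k : ι // k ≠ j} → E) × E) : PiLp 2 (fun _ : ι => E) :=
  WithLp.toLp 2 (fun k => if h : k = j then p.2 else p.1 ⟨k, h⟩)

lemma asmFun_linear (j : ι) : IsLinearMap ℝ (asmFun (E := E) j) := by
  constructor <;> intro x y <;> ext k <;> by_cases h : k = j <;>
    simp [asmFun, h]

lemma updateZero_linear (j : ι) :
    IsLinearMap ℝ (fun v : PiLp 2 (fun _ : ι => E) =>
      WithLp.toLp 2 (Function.update (WithLp.ofLp v) j 0)) := by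
  constructor <;> intro x y <;> ext k <;> by_cases h : k = j
  · subst h; simp
  · simp [h]
  · subst h; simp
  · simp [h]

lemma inner_split (j : ι) (a v : PiLp 2 (fun _ : ι => E)) :
    (inner ℝ a v : ℝ) = inner ℝ a (WithLp.toLp 2 (Function.update (WithLp.ofLp v) j 0)) + (inner ℝ (a j) (v j) : ℝ) := by
  classical
  simp only [PiLp.inner_apply, PiLp.toLp_apply]
  rw [← Finset.sum_erase_add _ _ (Finset.mem_univ j),
      ← Finset.sum_erase_add _ (fun k => (inner ℝ (a k) (Function.update v j 0 k) : ℝ))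
        (Finset.mem_univ j)]
  simp only [Function.update_self, inner_zero_right, add_zero]
  congr 1
  refine Finset.sum_congr rfl fun k hk => ?_
  rw [Function.update_of_ne (Finset.ne_of_mem_erase hk)]

lemma asmFun_inner_eq (j : ι) (b' : {k : ι // k ≠ j} → E) (w w' : E)
    {v : PiLp 2 (fun _ : ι => E)} (hv : v j = 0) :
    (inner ℝ (asmFun j (b', w)) v : ℝ) = inner ℝ (asmFun j (b', w')) v := by
  classical
  simp only [PiLp.inner_apply]
  refine Finset.sum_congr rfl fun k _ => ?_
  by_cases h : k = j
  · subst h; simp [hv]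
  · simp [asmFun, h]

lemma asmFun_restr (j : ι) (a : PiLp 2 (fun _ : ι => E)) :
    asmFun j ((fun k => a k.1), a j) = a := by
  ext k; by_cases h : k = j
  · subst h; simp [asmFun]
  · simp [asmFun, h]

/-- The level/parameter map whose range contains all "bad" pairs coming from chart `j`. -/
noncomputable def Pmap (j : ι) (Gf : E → ℝ) (Zf : E → PiLp 2 (fun _ : ι => E)) :
    E × ({k : ι // k ≠ j} → E) → (PiLp 2 (fun _ : ι => E)) × ℝ :=
  fun q =>
    let Θ : E × PiLp 2 (fun _ : ι => E) → ℝ := fun p => Gf p.1 + (inner ℝ p.2 (Zf p.1) : ℝ)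
    let b : PiLp 2 (fun _ : ι => E) := asmFun j (q.2, 0)
    let u : E := -(InnerProductSpace.toDual ℝ E).symm
      ((fderiv ℝ Θ (q.1, b)).comp (ContinuousLinearMap.inl ℝ E (PiLp 2 (fun _ : ι => E))))
    (asmFun j (q.2, u), Θ (q.1, b) + (inner ℝ u q.1 : ℝ))

/-- Any critical pair is in the image of `Pmap`. -/
lemma mem_Pmap_image (j : ι) {V : Set E} (hV : IsOpen V) {Gf : E → ℝ}
    {Zf : E → PiLp 2 (fun _ : ι => E)}
    (hG : ContDiffOn ℝ ∞ Gf V) (hZ : ContDiffOn ℝ ∞ Zf V)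
    (hZj : ∀ y, Zf y j = 0) (a : PiLp 2 (fun _ : ι => E)) {y : E} (hy : y ∈ V)
    (hcrit : fderiv ℝ (fun y' => Gf y' + (inner ℝ a (Zf y') : ℝ) + (inner ℝ (a j) y' : ℝ)) y = 0) :
    (a, Gf y + (inner ℝ a (Zf y) : ℝ) + (inner ℝ (a j) y : ℝ)) ∈
      Pmap j Gf Zf '' (V ×ˢ (univ : Set ({k : ι // k ≠ j} → E))) := by
  classical
  set Θ : E × PiLp 2 (fun _ : ι => E) → ℝ := fun p => Gf p.1 + (inner ℝ p.2 (Zf p.1) : ℝ)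
    with hΘdef
  set b : PiLp 2 (fun _ : ι => E) := asmFun j ((fun k => a k.1), 0) with hbdef
  have hb : ∀ y' : E, Θ (y', b) = Gf y' + (inner ℝ a (Zf y') : ℝ) := by
    intro y'
    have h1 : (inner ℝ (asmFun j ((fun k => a k.1), (0:E))) (Zf y') : ℝ)
        = inner ℝ (asmFun j ((fun k => a k.1), a j)) (Zf y') :=
      asmFun_inner_eq j _ _ _ (hZj y')
    simp only [hΘdef, hbdef, h1, asmFun_restr]
  have hD : IsOpen (V ×ˢ (univ : Set (PiLp 2 (fun _ : ι => E)))) := hV.prod isOpen_univ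
  have hΘsm : ContDiffOn ℝ ∞ Θ (V ×ˢ (univ : Set (PiLp 2 (fun _ : ι => E)))) := by
    apply ContDiffOn.add
    · exact hG.comp contDiff_fst.contDiffOn (fun p hp => hp.1)
    · exact ContDiffOn.inner ℝ contDiff_snd.contDiffOn
        (hZ.comp contDiff_fst.contDiffOn (fun p hp => hp.1))
  have hmem : (y, b) ∈ V ×ˢ (univ : Set (PiLp 2 (fun _ : ι => E))) := ⟨hy, trivial⟩
  have hΘdiff : DifferentiableAt ℝ Θ (y, b) :=
    (hΘsm.contDiffAt (hD.mem_nhds hmem)).differentiableAt (by simp)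
  set L := fderiv ℝ Θ (y, b) with hLdef
  have H1 : HasFDerivAt (fun y' => Θ (y', b))
      (L.comp (ContinuousLinearMap.inl ℝ E (PiLp 2 (fun _ : ι => E)))) y :=
    HasFDerivAt.comp y (f := fun y' : E => (y', b)) hΘdiff.hasFDerivAt (hasFDerivAt_prodMk_left y b)
  have H1' : HasFDerivAt (fun y' => Gf y' + (inner ℝ a (Zf y') : ℝ))
      (L.comp (ContinuousLinearMap.inl ℝ E (PiLp 2 (fun _ : ι => E)))) y := by
    have : (fun y' => Θ (y', b)) = fun y' => Gf y' + (inner ℝ a (Zf y') : ℝ) := funext hb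
    rwa [this] at H1
  have H2 : HasFDerivAt (fun y' : E => (inner ℝ (a j) y' : ℝ)) (innerSL ℝ (a j)) y :=
    (innerSL ℝ (a j)).hasFDerivAt
  have Hsum := H1'.add H2
  have h0 : L.comp (ContinuousLinearMap.inl ℝ E (PiLp 2 (fun _ : ι => E)))
      + innerSL ℝ (a j) = 0 := by
    rw [← Hsum.fderiv]; exact hcrit
  have hLinl : L.comp (ContinuousLinearMap.inl ℝ E (PiLp 2 (fun _ : ι => E)))
      = -(innerSL ℝ (a j)) := by
    rw [eq_neg_iff_add_eq_zero]; exact h0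
  have hu : -(InnerProductSpace.toDual ℝ E).symm
      (L.comp (ContinuousLinearMap.inl ℝ E (PiLp 2 (fun _ : ι => E)))) = a j := by
    rw [hLinl, map_neg, neg_neg]
    refine ((InnerProductSpace.toDual ℝ E).symm_apply_eq).mpr ?_
    ext z
    simp [InnerProductSpace.toDual_apply_apply]
  refine ⟨(y, fun k => a k.1), ⟨hy, trivial⟩, ?_⟩
  show (asmFun j (_, _), _) = _
  rw [Prod.ext_iff]
  constructor
  · show asmFun j ((fun k => a k.1), -(InnerProductSpace.toDual ℝ E).symm _) = a
    rw [hu, asmFun_restr]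
  · show Θ (y, b) + (inner ℝ (-(InnerProductSpace.toDual ℝ E).symm
      ((fderiv ℝ Θ (y, b)).comp (ContinuousLinearMap.inl ℝ E
        (PiLp 2 (fun _ : ι => E))))) y : ℝ) = _
    rw [hu, hb]

/-- The set of pairs produced by `Pmap` is meagre (a baby case of Sard's theorem). -/
lemma isMeagre_Pmap_image (j : ι) {V : Set E} (hV : IsOpen V) {Gf : E → ℝ}
    {Zf : E → PiLp 2 (fun _ : ι => E)}
    (hG : ContDiffOn ℝ ∞ Gf V) (hZ : ContDiffOn ℝ ∞ Zf V) :
    IsMeagre (Pmap j Gf Zf '' (V ×ˢ (univ : Set ({k : ι // k ≠ j} → E)))) := by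
  classical
  set Θ : E × PiLp 2 (fun _ : ι => E) → ℝ := fun p => Gf p.1 + (inner ℝ p.2 (Zf p.1) : ℝ)
    with hΘdef
  have hD : IsOpen (V ×ˢ (univ : Set (PiLp 2 (fun _ : ι => E)))) := hV.prod isOpen_univ
  have hΘsm : ContDiffOn ℝ ∞ Θ (V ×ˢ (univ : Set (PiLp 2 (fun _ : ι => E)))) := by
    apply ContDiffOn.add
    · exact hG.comp contDiff_fst.contDiffOn (fun p hp => hp.1)
    · exact ContDiffOn.inner ℝ contDiff_snd.contDiffOn
        (hZ.comp contDiff_fst.contDiffOn (fun p hp => hp.1))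
  set J : ((E × PiLp 2 (fun _ : ι => E)) →L[ℝ] ℝ) →L[ℝ] (E →L[ℝ] ℝ) :=
    (ContinuousLinearMap.compL ℝ E (E × PiLp 2 (fun _ : ι => E)) ℝ).flip
      (ContinuousLinearMap.inl ℝ E (PiLp 2 (fun _ : ι => E))) with hJdef
  set Dd : (E →L[ℝ] ℝ) →L[ℝ] E :=
    (InnerProductSpace.toDual ℝ E).symm.toContinuousLinearEquiv.toContinuousLinearMap with hDddef
  set solCLM : ((E × PiLp 2 (fun _ : ι => E)) →L[ℝ] ℝ) →L[ℝ] E := -(Dd.comp J) with hsoldef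
  have hsol_apply : ∀ L : (E × PiLp 2 (fun _ : ι => E)) →L[ℝ] ℝ,
      solCLM L = -(InnerProductSpace.toDual ℝ E).symm
        (L.comp (ContinuousLinearMap.inl ℝ E (PiLp 2 (fun _ : ι => E)))) := by
    intro L
    simp only [hsoldef, hDddef, hJdef, ContinuousLinearMap.neg_apply,
      ContinuousLinearMap.coe_comp', Function.comp_apply,
      ContinuousLinearMap.flip_apply, ContinuousLinearMap.compL_apply,
      ContinuousLinearEquiv.coe_coe, LinearIsometryEquiv.coe_toContinuousLinearEquiv]
  have hfd : ContDiffOn ℝ 1 (fderiv ℝ Θ) (V ×ˢ (univ : Set (PiLp 2 (fun _ : ι => E)))) :=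
    hΘsm.fderiv_of_isOpen hD (by norm_cast)
  set asmL : (({k : ι // k ≠ j} → E) × E) →L[ℝ] PiLp 2 (fun _ : ι => E) :=
    LinearMap.toContinuousLinearMap (IsLinearMap.mk' _ (asmFun_linear (E := E) j)) with hasmdef
  have hasm_apply : ∀ p, asmL p = asmFun j p := by intro p; simp [hasmdef]
  set ξ : E × ({k : ι // k ≠ j} → E) → E × PiLp 2 (fun _ : ι => E) :=
    fun q => (q.1, asmL (q.2, 0)) with hξdef
  have hξsm : ContDiff ℝ ⊤ ξ :=
    contDiff_fst.prodMk (asmL.contDiff.comp (contDiff_snd.prodMk contDiff_const))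
  set D' : Set (E × ({k : ι // k ≠ j} → E)) := V ×ˢ univ with hD'def
  have hD' : IsOpen D' := hV.prod isOpen_univ
  have hmapsTo : MapsTo ξ D' (V ×ˢ (univ : Set (PiLp 2 (fun _ : ι => E)))) :=
    fun q hq => ⟨hq.1, trivial⟩
  have hu : ContDiffOn ℝ 1 (fun q => solCLM (fderiv ℝ Θ (ξ q))) D' := by
    have h := (solCLM.contDiff.comp_contDiffOn hfd).comp (hξsm.of_le le_top).contDiffOn hmapsTo
    simpa [Function.comp_def] using h
  have hP : ContDiffOn ℝ 1 (Pmap j Gf Zf) D' := by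
    have hQ : ContDiffOn ℝ 1 (fun q => (asmL (q.2, solCLM (fderiv ℝ Θ (ξ q))),
        Θ (ξ q) + (inner ℝ (solCLM (fderiv ℝ Θ (ξ q))) q.1 : ℝ))) D' := by
      apply ContDiffOn.prodMk
      · exact asmL.contDiff.comp_contDiffOn ((contDiff_snd.contDiffOn).prodMk hu)
      · apply ContDiffOn.add
        · exact (hΘsm.of_le (by exact_mod_cast le_top)).comp (hξsm.of_le le_top).contDiffOn hmapsTo
        · exact ContDiffOn.inner ℝ hu contDiff_fst.contDiffOn
    have : Pmap j Gf Zf = fun q => (asmL (q.2, solCLM (fderiv ℝ Θ (ξ q))),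
        Θ (ξ q) + (inner ℝ (solCLM (fderiv ℝ Θ (ξ q))) q.1 : ℝ)) := by
      funext q
      simp only [Pmap, hsol_apply, hasm_apply, hξdef, hΘdef]
    rw [this]; exact hQ
  have hdim : dimH (Pmap j Gf Zf '' D') ≤
      (finrank ℝ (E × ({k : ι // k ≠ j} → E)) : ℝ≥0∞) := by
    have h1 : dimH (Pmap j Gf Zf '' D') ≤ dimH D' := by
      apply dimH_image_le_of_locally_lipschitzOn
      intro p hp
      obtain ⟨K, t, ht, hlip⟩ := ((hP p hp).contDiffAt (hD'.mem_nhds hp)).exists_lipschitzOnWith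
      exact ⟨K, t, nhdsWithin_le_nhds ht, hlip⟩
    refine h1.trans ?_
    rw [← Real.dimH_univ_eq_finrank]
    exact dimH_mono (subset_univ _)
  have hrank : (finrank ℝ (E × ({k : ι // k ≠ j} → E)) : ℝ≥0∞) <
      (finrank ℝ ((PiLp 2 (fun _ : ι => E)) × ℝ) : ℝ≥0∞) := by
    rw [Nat.cast_lt]
    have hcard : Fintype.card {k : ι // k ≠ j} = Fintype.card ι - 1 := by
      have := Fintype.card_subtype_compl (fun k : ι => k = j)
      simpa [Fintype.card_subtype_eq] using this
    have hm : 1 ≤ Fintype.card ι := Fintype.card_pos_iff.2 ⟨j⟩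
    obtain ⟨m', hm'⟩ : ∃ m', Fintype.card ι = m' + 1 :=
      ⟨Fintype.card ι - 1, (Nat.succ_pred_eq_of_pos hm).symm⟩
    have hA : finrank ℝ (PiLp 2 (fun _ : ι => E)) = Fintype.card ι * finrank ℝ E := by
      rw [(WithLp.linearEquiv 2 ℝ (∀ _ : ι, E)).finrank_eq]
      simp [Module.finrank_pi_fintype, Finset.sum_const, Finset.card_univ, mul_comm]
    have hA' : finrank ℝ ({k : ι // k ≠ j} → E) = m' * finrank ℝ E := by
      rw [Module.finrank_pi_fintype]
      simp [Finset.sum_const, Finset.card_univ, hcard, hm', mul_comm]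
    rw [Module.finrank_prod, Module.finrank_prod, hA, hA', hm', Module.finrank_self]
    set d := finrank ℝ E
    calc d + m' * d = m' * d + d := by ring
    _ < m' * d + d + 1 := Nat.lt_succ_self _
    _ = (m' + 1) * d + 1 := by ring
  have hr : ∀ p : ↥D', ∃ r : ℝ, 0 < r ∧
      closedBall (p : E × ({k : ι // k ≠ j} → E)) r ⊆ D' := by
    rintro ⟨p, hp⟩
    rcases Metric.isOpen_iff.1 hD' p hp with ⟨ρ, hρ, hsub⟩
    exact ⟨ρ/2, by positivity, (closedBall_subset_ball (by linarith)).trans hsub⟩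
  choose r hrpos hrsub using hr
  have hcover : D' ⊆ ⋃ p : ↥D', ball (p : E × ({k : ι // k ≠ j} → E)) (r p) := by
    intro q hq
    exact mem_iUnion.2 ⟨⟨q, hq⟩, mem_ball_self (hrpos _)⟩
  obtain ⟨tset, htc, htcover⟩ := (HereditarilyLindelof_LindelofSets D').elim_countable_subcover
    _ (fun p => isOpen_ball) hcover
  set S : Set (Set ((PiLp 2 (fun _ : ι => E)) × ℝ)) :=
    (fun p : ↥D' => Pmap j Gf Zf '' closedBall (p : E × ({k : ι // k ≠ j} → E)) (r p)) '' tset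
    with hSdef
  rw [isMeagre_iff_countable_union_isNowhereDense]
  refine ⟨S, ?_, htc.image _, ?_⟩
  · rintro s ⟨p, hp, rfl⟩
    have hcomp : IsCompact (Pmap j Gf Zf ''
        closedBall (p : E × ({k : ι // k ≠ j} → E)) (r p)) :=
      (isCompact_closedBall _ _).image_of_continuousOn (hP.continuousOn.mono (hrsub p))
    refine (hcomp.isClosed.isNowhereDense_iff).2 ?_
    refine interior_eq_empty_iff_dense_compl.2 ?_
    apply dense_compl_of_dimH_lt_finrank
    calc dimH (Pmap j Gf Zf '' closedBall (p : E × ({k : ι // k ≠ j} → E)) (r p))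
        ≤ dimH (Pmap j Gf Zf '' D') := dimH_mono (image_mono (hrsub p))
      _ ≤ _ := hdim
      _ < _ := hrank
  · intro q hq
    obtain ⟨z, hzD', rfl⟩ := hq
    obtain ⟨p, hp, hzp⟩ := mem_iUnion₂.1 (htcover hzD')
    exact ⟨_, ⟨p, hp, rfl⟩, mem_image_of_mem _ (ball_subset_closedBall hzp)⟩

end SardHelpers

set_option maxHeartbeats 1600000 in
theorem exists_smooth_function_with_regular_value
    (n : ℕ) (M : Type*) [TopologicalSpace M] [T2Space M] [SigmaCompactSpace M]
    [ChartedSpace (EuclideanSpace ℝ (Fin n)) M]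
    [IsManifold (𝓡 n) (⊤ : ℕ∞) M]
    (A B : Set M) (hA : IsClosed A) (hB : IsCompact B) (hBne : B.Nonempty)
    (hAB : A ∩ B = ∅) (c : ℝ) (hc : 0 < c) :
    ∃ f : M → ℝ, ContMDiff (𝓡 n) 𝓘(ℝ) (⊤ : ℕ∞) f ∧
      (∀ x ∈ A, f x = 0) ∧ (∀ x ∈ B, c < f x) ∧
      (∀ x : M, f x = c → mfderiv (𝓡 n) 𝓘(ℝ) f x ≠ 0) := by
  classical
  haveI : LocallyCompactSpace M :=
    ChartedSpace.locallyCompactSpace (EuclideanSpace ℝ (Fin n)) M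
  -- Step 1: a compact set K with B ⊆ interior K and K ∩ A = ∅
  have hBA : B ⊆ Aᶜ := fun x hx hxA => by
    have hmem : x ∈ A ∩ B := ⟨hxA, hx⟩
    simp [hAB] at hmem
  obtain ⟨K, hKcomp, hBK, hKA⟩ := exists_compact_between hB hA.isOpen_compl hBA
  -- Step 2: a smooth Urysohn function
  obtain ⟨g, hg0, hg1, hg01⟩ :=
    exists_contMDiffMap_zero_one_nhds_of_isClosed (I := 𝓡 n) (n := ⊤)
      (isOpen_interior : IsOpen (interior K)).isClosed_compl (hB.isClosed)
      (by rw [disjoint_compl_left_iff_subset]; exact hBK)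
  obtain ⟨W0, hW0open, hW0sup, hW0⟩ := eventually_nhdsSet_iff_exists.mp hg0
  obtain ⟨W1, hW1open, hW1sup, hW1⟩ := eventually_nhdsSet_iff_exists.mp hg1
  have hgA : ∀ x ∈ A, g x = 0 := fun x hx =>
    hW0 x (hW0sup (fun h => (hKA (interior_subset h)) hx))
  have hgB : ∀ x ∈ B, g x = 1 := fun x hx => hW1 x (hW1sup hx)
  have hgK : ∀ x, x ∉ K → g x = 0 := fun x hx =>
    hW0 x (hW0sup (fun h => hx (interior_subset h)))
  set T : Set M := ⇑g ⁻¹' Icc (1/4 : ℝ) (3/4) with hTdef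
  have hgcont : Continuous ⇑g := g.contMDiff.continuous
  have hTclosed : IsClosed T := IsClosed.preimage hgcont isClosed_Icc
  have hTK : T ⊆ K := by
    intro x hx
    by_contra hxK
    have h0 := hgK x hxK
    have h1 : (1/4 : ℝ) ≤ g x := hx.1
    rw [h0] at h1; norm_num at h1
  have hTcomp : IsCompact T := hKcomp.of_isClosed_subset hTclosed hTK
  set O : Set M := ⇑g ⁻¹' Ioo (0:ℝ) 1 with hOdef
  have hO_open : IsOpen O := isOpen_Ioo.preimage hgcont
  have hOK : O ⊆ K := by
    intro x hx
    by_contra hxK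
    have h0 := hgK x hxK
    have h1 : (0:ℝ) < g x := hx.1
    rw [h0] at h1; exact lt_irrefl _ h1
  -- Step 3: bump functions covering T
  have hex : ∀ x : ↥T, ∃ (fbx : SmoothBumpFunction (𝓡 n) (x : M)) (Ox : Set M),
      IsOpen Ox ∧ (x : M) ∈ Ox ∧ (∀ y ∈ Ox, fbx y = 1) ∧
      tsupport ⇑fbx ⊆ (chartAt (EuclideanSpace ℝ (Fin n)) (x : M)).source ∩ O := by
    rintro ⟨x, hx⟩
    have hxO : x ∈ O := by
      refine ⟨?_, ?_⟩
      · have := hx.1; norm_num at this ⊢; linarith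
      · have := hx.2; norm_num at this ⊢; linarith
    have hU : (chartAt (EuclideanSpace ℝ (Fin n)) x).source ∩ O ∈ 𝓝 x :=
      ((chartAt _ x).open_source.inter hO_open).mem_nhds ⟨mem_chart_source _ x, hxO⟩
    obtain ⟨fbx, -, hfbx⟩ :=
      (SmoothBumpFunction.nhds_basis_tsupport (I := 𝓡 n) x).mem_iff.1 hU
    obtain ⟨Ox, hOx1, hOxopen, hxOx⟩ := eventually_nhds_iff.mp fbx.eventuallyEq_one
    exact ⟨fbx, Ox, hOxopen, hxOx, hOx1, hfbx⟩
  choose fb Obump hObopen hObmem hOb1 htsub using hex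
  obtain ⟨ss, hsscover⟩ := hTcomp.elim_nhds_subcover' (fun x hx => Obump ⟨x, hx⟩)
      (fun x hx => (hObopen ⟨x, hx⟩).mem_nhds (hObmem ⟨x, hx⟩))
  -- the finite index type
  set ι : Type _ := {p : ↥T // p ∈ ss} with hιdef
  -- the Whitney-style perturbation map
  set Ψ0 : M → (ι → EuclideanSpace ℝ (Fin n)) :=
    fun p j => fb j.1 p • extChartAt (𝓡 n) (j.1 : M) p with hΨ0def
  have hΨ0sm : ContMDiff (𝓡 n) 𝓘(ℝ, ι → EuclideanSpace ℝ (Fin n)) ∞ Ψ0 :=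
    contMDiff_pi_space.2 fun j => (fb j.1).contMDiff_smul contMDiffOn_extChartAt
  set eqv := PiLp.continuousLinearEquiv 2 ℝ (fun _ : ι => EuclideanSpace ℝ (Fin n)) with heqv
  set Ψ : M → PiLp 2 (fun _ : ι => EuclideanSpace ℝ (Fin n)) :=
    fun p => eqv.symm (Ψ0 p) with hΨdef
  have hΨsm : ContMDiff (𝓡 n) 𝓘(ℝ, PiLp 2 (fun _ : ι => EuclideanSpace ℝ (Fin n))) ∞ Ψ :=
    ((eqv.symm : (ι → EuclideanSpace ℝ (Fin n)) →L[ℝ]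
        PiLp 2 (fun _ : ι => EuclideanSpace ℝ (Fin n))).contMDiff).comp hΨ0sm
  have hΨapp : ∀ p (k : ι), Ψ p k = fb k.1 p • extChartAt (𝓡 n) (k.1 : M) p := by
    intro p k
    simp [hΨdef, heqv, hΨ0def]
  have hΨsupp : ∀ p, p ∉ O → Ψ p = 0 := by
    intro p hp
    have hcomp : ∀ k : ι, fb k.1 p = 0 := by
      intro k
      by_contra h
      exact hp (htsub k.1 (subset_closure h)).2
    ext k
    simp [hΨapp, hcomp k]
  -- a bound for the perturbation
  obtain ⟨C₀, hC₀⟩ : ∃ C₀, ∀ p ∈ K, ‖Ψ p‖ ≤ C₀ := by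
    obtain ⟨C₀, hC₀⟩ := (hKcomp.image hΨsm.continuous.norm).bddAbove
    exact ⟨C₀, fun p hp => hC₀ (mem_image_of_mem _ hp)⟩
  set C₁ := max C₀ 0 with hC₁def
  have hC₁0 : 0 ≤ C₁ := le_max_right _ _
  have hΨbound : ∀ p, ‖Ψ p‖ ≤ C₁ := by
    intro p
    by_cases hp : p ∈ K
    · exact (hC₀ p hp).trans (le_max_left _ _)
    · have h0 : Ψ p = 0 := hΨsupp p (fun h => hp (hOK h))
      rw [h0, norm_zero]; exact hC₁0
  have hC1pos : 0 < C₁ + 1 := by linarith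
  set ε := (1/8 : ℝ) / (C₁ + 1) with hεdef
  have hεpos : 0 < ε := div_pos (by norm_num) hC1pos
  have hpert : ∀ (a : PiLp 2 (fun _ : ι => EuclideanSpace ℝ (Fin n))) (p : M),
      ‖a‖ < ε → |(inner ℝ a (Ψ p) : ℝ)| < 1/8 := by
    intro a p ha
    have h1 : |(inner ℝ a (Ψ p) : ℝ)| ≤ ‖a‖ * ‖Ψ p‖ := abs_real_inner_le_norm _ _
    have h2 : ‖a‖ * ‖Ψ p‖ ≤ ‖a‖ * (C₁ + 1) := by
      have h3 := hΨbound p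
      nlinarith [norm_nonneg a, norm_nonneg (Ψ p)]
    have h3 : ‖a‖ * (C₁ + 1) < ε * (C₁ + 1) := mul_lt_mul_of_pos_right ha hC1pos
    have h4 : ε * (C₁ + 1) = 1/8 := div_mul_cancel₀ _ (ne_of_gt hC1pos)
    linarith
  -- chart-local data
  set Vmap : ι → Set (EuclideanSpace ℝ (Fin n)) :=
    fun j => (chartAt (EuclideanSpace ℝ (Fin n)) (j.1 : M)) '' (Obump j.1) with hVmapdef
  set Gmap : ι → EuclideanSpace ℝ (Fin n) → ℝ :=
    fun j y => g ((chartAt (EuclideanSpace ℝ (Fin n)) (j.1 : M)).symm y) with hGmapdef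
  set Zmap : ι → EuclideanSpace ℝ (Fin n) →
      PiLp 2 (fun _ : ι => EuclideanSpace ℝ (Fin n)) :=
    fun j y => WithLp.toLp 2 (Function.update
      (WithLp.ofLp (Ψ ((chartAt (EuclideanSpace ℝ (Fin n)) (j.1 : M)).symm y))) j 0) with hZmapdef
  have hObsub : ∀ j : ι,
      Obump j.1 ⊆ (chartAt (EuclideanSpace ℝ (Fin n)) (j.1 : M)).source ∩ O := by
    intro j y hy
    have h1 : fb j.1 y = 1 := hOb1 j.1 y hy
    have h2 : y ∈ tsupport ⇑(fb j.1) := subset_closure (by simp [Function.mem_support, h1])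
    exact htsub j.1 h2
  have hVopen : ∀ j : ι, IsOpen (Vmap j) := fun j =>
    (chartAt _ _).isOpen_image_of_subset_source (hObopen j.1) (fun y hy => (hObsub j hy).1)
  have hVtarget : ∀ j : ι, Vmap j ⊆ (chartAt (EuclideanSpace ℝ (Fin n)) (j.1 : M)).target := by
    rintro j y ⟨x, hx, rfl⟩
    exact (chartAt _ _).map_source (hObsub j hx).1
  have hsymmmem : ∀ j : ι, ∀ y ∈ Vmap j,
      (chartAt (EuclideanSpace ℝ (Fin n)) (j.1 : M)).symm y ∈ Obump j.1 ∧
      (chartAt (EuclideanSpace ℝ (Fin n)) (j.1 : M))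
        ((chartAt (EuclideanSpace ℝ (Fin n)) (j.1 : M)).symm y) = y := by
    rintro j y ⟨x, hx, rfl⟩
    have h1 := (chartAt (EuclideanSpace ℝ (Fin n)) (j.1 : M)).left_inv (hObsub j hx).1
    rw [h1]
    exact ⟨hx, rfl⟩
  have hsymm_smOn : ∀ j : ι, ContMDiffOn (𝓡 n) (𝓡 n) ∞
      (chartAt (EuclideanSpace ℝ (Fin n)) (j.1 : M)).symm (Vmap j) :=
    fun j => (contMDiffOn_chart_symm (x := (j.1 : M))).mono (hVtarget j)
  have hGsm : ∀ j : ι, ContDiffOn ℝ ∞ (Gmap j) (Vmap j) := by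
    intro j
    have h := contMDiffOn_iff_contDiffOn.1 (g.contMDiff.comp_contMDiffOn (hsymm_smOn j))
    simpa [Function.comp_def] using h
  have hΨsymm : ∀ j : ι, ContDiffOn ℝ ∞
      (fun y => Ψ ((chartAt (EuclideanSpace ℝ (Fin n)) (j.1 : M)).symm y)) (Vmap j) := by
    intro j
    have h := contMDiffOn_iff_contDiffOn.1 (hΨsm.comp_contMDiffOn (hsymm_smOn j))
    simpa [Function.comp_def] using h
  have hZsm : ∀ j : ι, ContDiffOn ℝ ∞ (Zmap j) (Vmap j) := by
    intro j
    have hζ := updateZero_linear (E := EuclideanSpace ℝ (Fin n)) j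
    haveI : ContinuousSMul ℝ (PiLp 2 (fun _ : ι => EuclideanSpace ℝ (Fin n))) :=
      IsBoundedSMul.continuousSMul
    have heq : Zmap j = fun y =>
        (LinearMap.toContinuousLinearMap (IsLinearMap.mk'
          (fun v : PiLp 2 (fun _ : ι => EuclideanSpace ℝ (Fin n)) =>
            WithLp.toLp 2 (Function.update (WithLp.ofLp v) j 0)) hζ))
          (Ψ ((chartAt (EuclideanSpace ℝ (Fin n)) (j.1 : M)).symm y)) := by
      funext y
      simp [hZmapdef]
    rw [heq]
    exact (LinearMap.toContinuousLinearMap _).contDiff.comp_contDiffOn (hΨsymm j)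
  have hZj0 : ∀ j : ι, ∀ y, Zmap j y j = 0 := by
    intro j y; simp [hZmapdef]
  -- the chart-side identity
  have hform : ∀ (j : ι) (a : PiLp 2 (fun _ : ι => EuclideanSpace ℝ (Fin n))),
      ∀ y ∈ Vmap j,
      g ((chartAt (EuclideanSpace ℝ (Fin n)) (j.1 : M)).symm y)
        + (inner ℝ a (Ψ ((chartAt (EuclideanSpace ℝ (Fin n)) (j.1 : M)).symm y)) : ℝ)
      = Gmap j y + (inner ℝ a (Zmap j y) : ℝ) + (inner ℝ (a j) y : ℝ) := by
    intro j a y hy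
    obtain ⟨hmem, hchart⟩ := hsymmmem j y hy
    have hΨj : Ψ ((chartAt (EuclideanSpace ℝ (Fin n)) (j.1 : M)).symm y) j = y := by
      rw [hΨapp, hOb1 j.1 _ hmem, one_smul]
      have hcoe : (extChartAt (𝓡 n) (j.1 : M))
            ((chartAt (EuclideanSpace ℝ (Fin n)) (j.1 : M)).symm y)
          = (chartAt (EuclideanSpace ℝ (Fin n)) (j.1 : M))
            ((chartAt (EuclideanSpace ℝ (Fin n)) (j.1 : M)).symm y) := by
        simp [extChartAt_coe]
      rw [hcoe, hchart]
    rw [inner_split j a (Ψ ((chartAt (EuclideanSpace ℝ (Fin n)) (j.1 : M)).symm y)), hΨj]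
    simp only [hGmapdef, hZmapdef]
    ring
  -- the meagre set of bad parameter/level pairs
  set Bad : Set ((PiLp 2 (fun _ : ι => EuclideanSpace ℝ (Fin n))) × ℝ) :=
    ⋃ j : ι, Pmap j (Gmap j) (Zmap j) '' ((Vmap j) ×ˢ univ) with hBaddef
  have hBadMeagre : IsMeagre Bad := by
    rw [hBaddef, IsMeagre, compl_iUnion]
    exact countable_iInter_mem.2 fun j =>
      isMeagre_Pmap_image j (hVopen j) (hGsm j) (hZsm j)
  -- criticality sends points of T to Bad
  have hkey : ∀ (a : PiLp 2 (fun _ : ι => EuclideanSpace ℝ (Fin n))) (x : M), x ∈ T →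
      mfderiv (𝓡 n) 𝓘(ℝ) (fun p => g p + (inner ℝ a (Ψ p) : ℝ)) x = 0 →
      (a, g x + (inner ℝ a (Ψ x) : ℝ)) ∈ Bad := by
    intro a x hxT hcrit
    obtain ⟨j', hj'ss, hxO⟩ := mem_iUnion₂.1 (hsscover hxT)
    set j : ι := ⟨j', hj'ss⟩ with hjdef
    have hxsource : x ∈ (chartAt (EuclideanSpace ℝ (Fin n)) (j.1 : M)).source :=
      (hObsub j hxO).1
    set y := (chartAt (EuclideanSpace ℝ (Fin n)) (j.1 : M)) x with hydef
    have hyV : y ∈ Vmap j := mem_image_of_mem _ hxO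
    have hsymmy : (chartAt (EuclideanSpace ℝ (Fin n)) (j.1 : M)).symm y = x :=
      (chartAt (EuclideanSpace ℝ (Fin n)) (j.1 : M)).left_inv hxsource
    have hfam_sm : ContMDiff (𝓡 n) 𝓘(ℝ) ∞ (fun p => g p + (inner ℝ a (Ψ p) : ℝ)) :=
      g.contMDiff.add ((innerSL ℝ a).contMDiff.comp hΨsm)
    have hdiff1 : MDifferentiableAt (𝓡 n) (𝓡 n)
        (chartAt (EuclideanSpace ℝ (Fin n)) (j.1 : M)).symm y :=
      mdifferentiableAt_atlas_symm (I := 𝓡 n) (chart_mem_atlas _ _)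
        ((chartAt (EuclideanSpace ℝ (Fin n)) (j.1 : M)).map_source hxsource)
    have hdiff2 : MDifferentiableAt (𝓡 n) 𝓘(ℝ) (fun p => g p + (inner ℝ a (Ψ p) : ℝ))
        ((chartAt (EuclideanSpace ℝ (Fin n)) (j.1 : M)).symm y) := by
      rw [hsymmy]; exact hfam_sm.mdifferentiableAt (by simp)
    have hcomp := mfderiv_comp y hdiff2 hdiff1
    have hcrit2 : mfderiv (𝓡 n) 𝓘(ℝ) (fun p => g p + (inner ℝ a (Ψ p) : ℝ))
        ((chartAt (EuclideanSpace ℝ (Fin n)) (j.1 : M)).symm y) = 0 := by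
      rw [hsymmy]; exact hcrit
    rw [hcrit2, ContinuousLinearMap.zero_comp] at hcomp
    have hfder : fderiv ℝ ((fun p => g p + (inner ℝ a (Ψ p) : ℝ)) ∘
        (chartAt (EuclideanSpace ℝ (Fin n)) (j.1 : M)).symm) y = 0 := by
      rw [← mfderiv_eq_fderiv]; exact hcomp
    have heq : ((fun p => g p + (inner ℝ a (Ψ p) : ℝ)) ∘
        (chartAt (EuclideanSpace ℝ (Fin n)) (j.1 : M)).symm) =ᶠ[nhds y]
        (fun y' => Gmap j y' + (inner ℝ a (Zmap j y') : ℝ) + (inner ℝ (a j) y' : ℝ)) := by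
      filter_upwards [(hVopen j).mem_nhds hyV] with y' hy'
      exact hform j a y' hy'
    have hcrit' : fderiv ℝ
        (fun y' => Gmap j y' + (inner ℝ a (Zmap j y') : ℝ) + (inner ℝ (a j) y' : ℝ)) y = 0 := by
      rw [← heq.fderiv_eq]; exact hfder
    have hmem := mem_Pmap_image j (hVopen j) (hGsm j) (hZsm j) (hZj0 j) a hyV hcrit'
    have hval : Gmap j y + (inner ℝ a (Zmap j y) : ℝ) + (inner ℝ (a j) y : ℝ)
        = g x + (inner ℝ a (Ψ x) : ℝ) := by
      rw [← hform j a y hyV, hsymmy]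
    rw [hval] at hmem
    exact mem_iUnion.2 ⟨j, hmem⟩
  -- choose a good parameter/level pair by Baire
  set Box : Set ((PiLp 2 (fun _ : ι => EuclideanSpace ℝ (Fin n))) × ℝ) :=
    (ball (0 : PiLp 2 (fun _ : ι => EuclideanSpace ℝ (Fin n))) ε) ×ˢ (Ioo (3/8 : ℝ) (5/8))
    with hBoxdef
  have hBoxopen : IsOpen Box := isOpen_ball.prod isOpen_Ioo
  have hBoxne : Box.Nonempty := ⟨(0, 1/2), ⟨mem_ball_self hεpos, by norm_num, by norm_num⟩⟩
  have hnotsub : ¬ Box ⊆ Bad := by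
    intro hsub
    have hmeagre : IsMeagre Box := hBadMeagre.mono hsub
    have hdense : Dense Boxᶜ := dense_of_mem_residual hmeagre
    obtain ⟨z, hz1, hz2⟩ := hdense.inter_open_nonempty Box hBoxopen hBoxne
    exact hz2 hz1
  obtain ⟨⟨a, t⟩, hmemBox, hnotBad⟩ := not_subset.mp hnotsub
  have hanorm : ‖a‖ < ε := mem_ball_zero_iff.mp hmemBox.1
  have ht1 : (3/8 : ℝ) < t := hmemBox.2.1
  have ht2 : t < 5/8 := hmemBox.2.2
  have ht0 : 0 < t := by linarith
  have htlt1 : t < 1 := by linarith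
  -- the final function
  refine ⟨fun x => (c / t) * (g x + (inner ℝ a (Ψ x) : ℝ)), ?_, ?_, ?_, ?_⟩
  · exact contMDiff_const.mul (g.contMDiff.add ((innerSL ℝ a).contMDiff.comp hΨsm))
  · intro x hx
    have h0 := hgA x hx
    have hΨ0 : Ψ x = 0 := hΨsupp x (fun hmem => by
      have h' := hmem.1; rw [h0] at h'; exact lt_irrefl _ h')
    simp [h0, hΨ0]
  · intro x hx
    have h1 := hgB x hx
    have hΨ0 : Ψ x = 0 := hΨsupp x (fun hmem => by
      have h' := hmem.2; rw [h1] at h'; exact lt_irrefl _ h')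
    have hctgt : c < c / t := by
      rw [lt_div_iff₀ ht0]; nlinarith
    simpa [h1, hΨ0] using hctgt
  · intro x hfx hzero
    have hct : c / t ≠ 0 := div_ne_zero (ne_of_gt hc) (ne_of_gt ht0)
    have hFt : g x + (inner ℝ a (Ψ x) : ℝ) = t := by
      have h5 : (c / t) * (g x + (inner ℝ a (Ψ x) : ℝ)) = c := hfx
      have h6 : (c / t) * (g x + (inner ℝ a (Ψ x) : ℝ)) = (c / t) * t := by
        rw [h5, div_mul_cancel₀ _ (ne_of_gt ht0)]
      exact mul_left_cancel₀ hct h6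
    have habs := abs_lt.mp (hpert a x hanorm)
    have hxT : x ∈ T := by
      have hgx : g x = t - (inner ℝ a (Ψ x) : ℝ) := by linarith
      constructor
      · rw [hgx]; linarith [habs.1, habs.2]
      · rw [hgx]; linarith [habs.1, habs.2]
    have hsm2 : MDifferentiableAt (𝓡 n) 𝓘(ℝ) (fun p => g p + (inner ℝ a (Ψ p) : ℝ)) x :=
      (g.contMDiff.add ((innerSL ℝ a).contMDiff.comp hΨsm)).mdifferentiableAt (by simp)
    have hsmul := const_smul_mfderiv hsm2 (c / t)
    have hfeq : (fun p => (c / t) * (g p + (inner ℝ a (Ψ p) : ℝ)))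
        = (c / t) • (fun p => g p + (inner ℝ a (Ψ p) : ℝ)) := rfl
    rw [hfeq, hsmul] at hzero
    have hD0 : mfderiv (𝓡 n) 𝓘(ℝ) (fun p => g p + (inner ℝ a (Ψ p) : ℝ)) x = 0 := by
      have h8 : (t / c) * (c / t) = 1 := by field_simp
      have h9 := congrArg (fun L => (t / c) • L) hzero
      exact (smul_eq_zero.mp hzero).resolve_left hct
    have hbad := hkey a x hxT hD0
    rw [hFt] at hbad
    exact hnotBad hbad
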